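/- arXiv:0904.1923 — 3 statements merged into one kernel-verified Lean document; each statement's English description precedes it below -/
import Mathlib

section
/- Let G = (V,E) be a finite simple graph, v a vertex of G, and M a module of G*v with v ∈ M. Then (V ∖ M) ∪ {v} is a module of G. -/
universe u

/-- The Seidel complement of `G` at `v`: adjacency between the open neighborhood of `v`
and the set of vertices different from `v` and not adjacent to `v` is complemented,
all other adjacencies are unchanged. -/
def seidelCompl {V : Type u} (G : SimpleGraph V) (v : V) : SimpleGraph V where
  Adj x y := x ≠ y ∧
    Xor' (G.Adj x y)
      ((G.Adj v x ∧ ¬ G.Adj v y ∧ y ≠ v) ∨ (G.Adj v y ∧ ¬ G.Adj v x ∧ x ≠ v))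
  symm := ⟨by
    rintro x y ⟨hxy, h⟩
    refine ⟨hxy.symm, ?_⟩
    have h1 : G.Adj x y ↔ G.Adj y x := G.adj_comm x y
    unfold Xor' at h ⊢
    unfold Xor at h ⊢
    tauto⟩
  loopless := ⟨fun x h => h.1 rfl⟩

/-- `M` is a module of `G`: every vertex outside `M` is adjacent either to all
vertices of `M` or to none of them. -/
def IsModule {V : Type u} (G : SimpleGraph V) (M : Set V) : Prop :=
  ∀ z ∉ M, (∀ m ∈ M, G.Adj z m) ∨ (∀ m ∈ M, ¬ G.Adj z m)

/-- `G` is prime w.r.t. modular decomposition: every module is trivial. -/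
def IsPrime {V : Type u} (G : SimpleGraph V) : Prop :=
  ∀ M : Set V, IsModule G M → M = ∅ ∨ (∃ x, M = {x}) ∨ M = Set.univ

/-- If `M` is a module of `G*v` containing `v`, then `(V ∖ M) ∪ {v}` is a module of `G`. -/
theorem isModule_compl_union_of_seidelCompl {V : Type u} [Fintype V] (G : SimpleGraph V)
    (v : V) (M : Set V) (hM : IsModule (seidelCompl G v) M) (hv : v ∈ M) :
    IsModule G (Mᶜ ∪ {v}) := by
  intro z hz
  simp only [Set.mem_union, Set.mem_compl_iff, Set.mem_singleton_iff, not_or, not_not] at hz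
  obtain ⟨hzM, hzv⟩ := hz
  have key : ∀ m ∉ M, (G.Adj z m ↔ G.Adj z v) := by
    intro m hmM
    have hmv : m ≠ v := fun h => hmM (h ▸ hv)
    have hmz : m ≠ z := fun h => hmM (h ▸ hzM)
    have hvv : ¬ G.Adj v v := G.loopless.irrefl v
    have hvne : ¬ (v ≠ v) := fun h => h rfl
    have sv : ∀ x, (seidelCompl G v).Adj x v ↔ G.Adj x v := by
      intro x
      constructor
      · rintro ⟨hxv, h⟩
        unfold Xor' Xor at h
        tauto
      · intro h
        refine ⟨G.ne_of_adj h, ?_⟩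
        unfold Xor'
        tauto
    by_cases hvm : G.Adj v m
    · have hall := (hM m hmM).resolve_right
        (fun h => h v hv ((sv m).mpr (G.adj_symm hvm)))
      have h2 := hall z hzM
      simp only [seidelCompl] at h2
      unfold Xor' Xor at h2
      obtain ⟨hne2, h2⟩ := h2
      by_cases hvz : G.Adj v z
      · have hmzadj : G.Adj m z := by tauto
        exact iff_of_true hmzadj.symm hvz.symm
      · have hmzadj : ¬ G.Adj m z := by tauto
        exact iff_of_false (fun h => hmzadj h.symm) (fun h => hvz h.symm)
    · have hnone := (hM m hmM).resolve_left
        (fun h => hvm (G.adj_symm ((sv m).mp (h v hv))))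
      have h2 := hnone z hzM
      simp only [seidelCompl] at h2
      unfold Xor' Xor at h2
      by_cases hvz : G.Adj v z
      · have hmzadj : G.Adj m z := by tauto
        exact iff_of_true hmzadj.symm hvz.symm
      · have hmzadj : ¬ G.Adj m z := by tauto
        exact iff_of_false (fun h => hmzadj h.symm) (fun h => hvz h.symm)
  by_cases hvz : G.Adj z v
  · left
    rintro m (hm | hm)
    · exact (key m hm).mpr hvz
    · simp only [Set.mem_singleton_iff] at hm
      subst hm; exact hvz
  · right
    rintro m (hm | hm)
    · exact fun ha => hvz ((key m hm).mp ha)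
    · simp only [Set.mem_singleton_iff] at hm
      subst hm; exact hvz
end

section
/- Let G = (V,E) be a finite simple graph and v a vertex of G. If M is a module of G with v ∉ M, then M is also a module of G*v. -/
universe u

/-- A module of `G` avoiding `v` is also a module of `G*v`. -/
theorem isModule_seidelCompl_of_not_mem {V : Type u} [Fintype V] (G : SimpleGraph V)
    (v : V) (M : Set V) (hM : IsModule G M) (hv : v ∉ M) :
    IsModule (seidelCompl G v) M := by
  intro z hz
  have hzG := hM z hz
  have hvG := hM v hv
  have key : ∀ m₁ ∈ M, ∀ m₂ ∈ M,
      ((seidelCompl G v).Adj z m₁ ↔ (seidelCompl G v).Adj z m₂) := by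
    intro m₁ h₁ m₂ h₂
    have e1 : G.Adj z m₁ ↔ G.Adj z m₂ := by
      rcases hzG with h | h
      · exact ⟨fun _ => h m₂ h₂, fun _ => h m₁ h₁⟩
      · exact ⟨fun a => absurd a (h m₁ h₁), fun a => absurd a (h m₂ h₂)⟩
    have e2 : G.Adj v m₁ ↔ G.Adj v m₂ := by
      rcases hvG with h | h
      · exact ⟨fun _ => h m₂ h₂, fun _ => h m₁ h₁⟩
      · exact ⟨fun a => absurd a (h m₁ h₁), fun a => absurd a (h m₂ h₂)⟩
    have n1 : z ≠ m₁ := fun h => hz (h ▸ h₁)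
    have n2 : z ≠ m₂ := fun h => hz (h ▸ h₂)
    have nv1 : m₁ ≠ v := fun h => hv (h ▸ h₁)
    have nv2 : m₂ ≠ v := fun h => hv (h ▸ h₂)
    show (z ≠ m₁ ∧ Xor' _ _) ↔ (z ≠ m₂ ∧ Xor' _ _)
    simp only [Xor', e1, e2, ne_eq, n1, not_false_eq_true, true_and, n2, nv1, nv2]
  rcases Set.eq_empty_or_nonempty M with rfl | ⟨m₀, hm₀⟩
  · left; intro m hm; exact absurd hm (Set.notMem_empty m)
  by_cases h0 : (seidelCompl G v).Adj z m₀
  · left; intro m hm; exact (key m₀ hm₀ m hm).mp h0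
  · right; intro m hm; exact fun h => h0 ((key m hm m₀ hm₀).mp h)
end

section
/- Let G = (V,E) be a finite simple graph and v a vertex of G. Then G is a cograph if and only if G*v is a cograph. -/
universe u

/-- A cograph: a graph with no induced subgraph isomorphic to `P₄`,
the path on four vertices. -/
def IsCograph {V : Type u} (G : SimpleGraph V) : Prop :=
  IsEmpty (SimpleGraph.pathGraph 4 ↪g G)

/-! auxiliary -/

lemma seidelCompl_adj {V : Type u} (G : SimpleGraph V) (v x y : V) :
    (seidelCompl G v).Adj x y ↔ x ≠ y ∧
    Xor' (G.Adj x y)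
      ((G.Adj v x ∧ ¬ G.Adj v y ∧ y ≠ v) ∨ (G.Adj v y ∧ ¬ G.Adj v x ∧ x ≠ v)) := Iff.rfl

lemma seidelCompl_adj_v {V : Type u} (G : SimpleGraph V) (v x : V) :
    (seidelCompl G v).Adj v x ↔ G.Adj v x := by
  have h0 : ¬ G.Adj v v := G.irrefl
  have h1 : G.Adj v x → v ≠ x := fun h => h.ne
  simp only [seidelCompl_adj, Xor']
  unfold Xor
  tauto

lemma seidelCompl_invol {V : Type u} (G : SimpleGraph V) (v : V) :
    seidelCompl (seidelCompl G v) v = G := by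
  ext x y
  rw [seidelCompl_adj (seidelCompl G v) v x y, seidelCompl_adj G v x y,
    seidelCompl_adj_v, seidelCompl_adj_v]
  have h3 : G.Adj x y → x ≠ y := fun h => h.ne
  unfold Xor'
  unfold Xor
  tauto

def sA {n : ℕ} (A : Fin n → Fin n → Bool) (k i j : Fin n) : Bool :=
  xor (A i j) ((A k i && !A k j && !(decide (j = k))) || (A k j && !A k i && !(decide (i = k))))

def pat {n : ℕ} (A : Fin n → Fin n → Bool) (a b c d : Fin n) : Bool :=
  A a b && A b c && A c d && !A a c && !A a d && !A b d

lemma xor_decide_iff (p q : Prop) [Decidable p] [Decidable q] :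
    xor (decide p) (decide q) = true ↔ Xor' p q := by
  by_cases hp : p <;> by_cases hq : q <;> simp [hp, hq, Xor']

lemma sA_bridge {V : Type u} {G : SimpleGraph V} [DecidableRel G.Adj] {n : ℕ}
    (h : Fin n → V) (hinj : Function.Injective h) {v : V} (k : Fin n) (hk : h k = v)
    {i j : Fin n} (hij : i ≠ j) :
    sA (fun a b => decide (G.Adj (h a) (h b))) k i j = true ↔
      (seidelCompl G v).Adj (h i) (h j) := by
  subst hk
  have hne : h i ≠ h j := fun e => hij (hinj e)
  have hjk : (h j = h k) ↔ (j = k) := hinj.eq_iff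
  have hik : (h i = h k) ↔ (i = k) := hinj.eq_iff
  rw [seidelCompl_adj]
  by_cases a1 : G.Adj (h i) (h j) <;> by_cases a2 : G.Adj (h k) (h i) <;>
    by_cases a3 : G.Adj (h k) (h j) <;> by_cases e1 : j = k <;> by_cases e2 : i = k <;>
    simp [sA, Xor', Xor, a1, a2, a3, e1, e2, hne, hjk, hik] <;>
    exact fun e => e1 ((hinj e).symm)

def mkA4 (e01 e02 e03 e12 e13 e23 : Bool) : Fin 4 → Fin 4 → Bool :=
  fun i j => match i.val, j.val with
  | 0,1 => e01 | 1,0 => e01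
  | 0,2 => e02 | 2,0 => e02
  | 0,3 => e03 | 3,0 => e03
  | 1,2 => e12 | 2,1 => e12
  | 1,3 => e13 | 3,1 => e13
  | 2,3 => e23 | 3,2 => e23
  | _,_ => false

def mkA5 (e01 e02 e03 e04 e12 e13 e14 e23 e24 e34 : Bool) : Fin 5 → Fin 5 → Bool :=
  fun i j => match i.val, j.val with
  | 0,1 => e01 | 1,0 => e01
  | 0,2 => e02 | 2,0 => e02
  | 0,3 => e03 | 3,0 => e03
  | 0,4 => e04 | 4,0 => e04
  | 1,2 => e12 | 2,1 => e12
  | 1,3 => e13 | 3,1 => e13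
  | 1,4 => e14 | 4,1 => e14
  | 2,3 => e23 | 3,2 => e23
  | 2,4 => e24 | 4,2 => e24
  | 3,4 => e34 | 4,3 => e34
  | _,_ => false

lemma eqA4 (A : Fin 4 → Fin 4 → Bool) (hs : ∀ i j, A j i = A i j) (hi : ∀ i, A i i = false) :
    A = mkA4 (A 0 1) (A 0 2) (A 0 3) (A 1 2) (A 1 3) (A 2 3) := by
  funext i j
  fin_cases i <;> fin_cases j <;> first | rfl | exact hi _ | exact hs _ _

lemma eqA5 (A : Fin 5 → Fin 5 → Bool) (hs : ∀ i j, A j i = A i j) (hi : ∀ i, A i i = false) :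
    A = mkA5 (A 0 1) (A 0 2) (A 0 3) (A 0 4) (A 1 2) (A 1 3) (A 1 4) (A 2 3) (A 2 4) (A 3 4) := by
  funext i j
  fin_cases i <;> fin_cases j <;> first | rfl | exact hi _ | exact hs _ _

set_option maxHeartbeats 2000000 in
lemma key4 : ∀ (e01 e02 e03 e12 e13 e23 : Bool) (k : Fin 4),
    sA (mkA4 e01 e02 e03 e12 e13 e23) k 0 1 = true →
    sA (mkA4 e01 e02 e03 e12 e13 e23) k 1 2 = true →
    sA (mkA4 e01 e02 e03 e12 e13 e23) k 2 3 = true →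
    sA (mkA4 e01 e02 e03 e12 e13 e23) k 0 2 = false →
    sA (mkA4 e01 e02 e03 e12 e13 e23) k 0 3 = false →
    sA (mkA4 e01 e02 e03 e12 e13 e23) k 1 3 = false →
    ∃ a b c d : Fin 4, pat (mkA4 e01 e02 e03 e12 e13 e23) a b c d = true := by
  decide

set_option maxHeartbeats 4000000 in
lemma key5 : ∀ (e01 e02 e03 e04 e12 e13 e14 e23 e24 e34 : Bool),
    sA (mkA5 e01 e02 e03 e04 e12 e13 e14 e23 e24 e34) 4 0 1 = true →
    sA (mkA5 e01 e02 e03 e04 e12 e13 e14 e23 e24 e34) 4 1 2 = true →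
    sA (mkA5 e01 e02 e03 e04 e12 e13 e14 e23 e24 e34) 4 2 3 = true →
    sA (mkA5 e01 e02 e03 e04 e12 e13 e14 e23 e24 e34) 4 0 2 = false →
    sA (mkA5 e01 e02 e03 e04 e12 e13 e14 e23 e24 e34) 4 0 3 = false →
    sA (mkA5 e01 e02 e03 e04 e12 e13 e14 e23 e24 e34) 4 1 3 = false →
    ∃ a b c d : Fin 5, pat (mkA5 e01 e02 e03 e04 e12 e13 e14 e23 e24 e34) a b c d = true := by
  decide

lemma exists_p4 {V : Type u} (G : SimpleGraph V) {a b c d : V}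
    (h1 : G.Adj a b) (h2 : G.Adj b c) (h3 : G.Adj c d)
    (h4 : ¬ G.Adj a c) (h5 : ¬ G.Adj a d) (h6 : ¬ G.Adj b d) :
    Nonempty (SimpleGraph.pathGraph 4 ↪g G) := by
  have nab : a ≠ b := h1.ne
  have nbc : b ≠ c := h2.ne
  have ncd : c ≠ d := h3.ne
  have nac : a ≠ c := by rintro rfl; exact h5 h3
  have nad : a ≠ d := by rintro rfl; exact h4 h3.symm
  have nbd : b ≠ d := by rintro rfl; exact h5 h1
  have h1' : G.Adj b a := h1.symm
  have h2' : G.Adj c b := h2.symm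
  have h3' : G.Adj d c := h3.symm
  have h4' : ¬ G.Adj c a := fun e => h4 e.symm
  have h5' : ¬ G.Adj d a := fun e => h5 e.symm
  have h6' : ¬ G.Adj d b := fun e => h6 e.symm
  refine ⟨⟨⟨![a,b,c,d], ?_⟩, ?_⟩⟩
  · intro i j e
    fin_cases i <;> fin_cases j <;>
      simp_all [Matrix.cons_val_zero, Matrix.cons_val_one]
  · intro i j
    fin_cases i <;> fin_cases j <;>
      simp_all [SimpleGraph.pathGraph_adj, G.irrefl] <;> assumption

def ext5 {V : Type u} (f : Fin 4 → V) (v : V) : Fin 5 → V :=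
  fun i => if hlt : (i : ℕ) < 4 then f ⟨i, hlt⟩ else v

lemma ext5_inj {V : Type u} {f : Fin 4 → V} {v : V} (hf : Function.Injective f)
    (hv : ∀ k, f k ≠ v) : Function.Injective (ext5 f v) := by
  intro i j e
  unfold ext5 at e
  by_cases hi4 : (i : ℕ) < 4 <;> by_cases hj4 : (j : ℕ) < 4
  · rw [dif_pos hi4, dif_pos hj4] at e
    have h2 := congrArg Fin.val (hf e)
    exact Fin.ext h2
  · rw [dif_pos hi4, dif_neg hj4] at e
    exact absurd e (hv _)
  · rw [dif_neg hi4, dif_pos hj4] at e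
    exact absurd e.symm (hv _)
  · have hi5 := i.isLt
    have hj5 := j.isLt
    exact Fin.ext (by omega)

lemma hasP4_of_seidel {V : Type u} (G : SimpleGraph V) (v : V)
    (f : SimpleGraph.pathGraph 4 ↪g seidelCompl G v) :
    Nonempty (SimpleGraph.pathGraph 4 ↪g G) := by
  classical
  have p01 : (seidelCompl G v).Adj (f 0) (f 1) :=
    f.map_rel_iff.mpr (by rw [SimpleGraph.pathGraph_adj]; decide)
  have p12 : (seidelCompl G v).Adj (f 1) (f 2) :=
    f.map_rel_iff.mpr (by rw [SimpleGraph.pathGraph_adj]; decide)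
  have p23 : (seidelCompl G v).Adj (f 2) (f 3) :=
    f.map_rel_iff.mpr (by rw [SimpleGraph.pathGraph_adj]; decide)
  have n02 : ¬ (seidelCompl G v).Adj (f 0) (f 2) := by
    rw [f.map_rel_iff, SimpleGraph.pathGraph_adj]; decide
  have n03 : ¬ (seidelCompl G v).Adj (f 0) (f 3) := by
    rw [f.map_rel_iff, SimpleGraph.pathGraph_adj]; decide
  have n13 : ¬ (seidelCompl G v).Adj (f 1) (f 3) := by
    rw [f.map_rel_iff, SimpleGraph.pathGraph_adj]; decide
  by_cases hv : ∃ k : Fin 4, f k = v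
  · obtain ⟨k, hk⟩ := hv
    have hinj : Function.Injective ⇑f := f.injective
    set A : Fin 4 → Fin 4 → Bool := fun a b => decide (G.Adj (f a) (f b)) with hA
    have hs : ∀ i j, A j i = A i j := by
      intro i j; simp only [hA, decide_eq_decide]; exact G.adj_comm _ _
    have hirr : ∀ i, A i i = false := by intro i; simp [hA]
    have hb : ∀ {i j : Fin 4}, i ≠ j →
        (sA A k i j = true ↔ (seidelCompl G v).Adj (f i) (f j)) :=
      fun hij => sA_bridge (⇑f) hinj k hk hij
    have H1 : sA A k 0 1 = true := (hb (by decide)).mpr p01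
    have H2 : sA A k 1 2 = true := (hb (by decide)).mpr p12
    have H3 : sA A k 2 3 = true := (hb (by decide)).mpr p23
    have H4 : sA A k 0 2 = false :=
      Bool.eq_false_iff.mpr (fun hx => n02 ((hb (by decide)).mp hx))
    have H5 : sA A k 0 3 = false :=
      Bool.eq_false_iff.mpr (fun hx => n03 ((hb (by decide)).mp hx))
    have H6 : sA A k 1 3 = false :=
      Bool.eq_false_iff.mpr (fun hx => n13 ((hb (by decide)).mp hx))
    rw [eqA4 A hs hirr] at H1 H2 H3 H4 H5 H6
    obtain ⟨a, b, c, d, hp⟩ := key4 _ _ _ _ _ _ k H1 H2 H3 H4 H5 H6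
    rw [← eqA4 A hs hirr] at hp
    simp only [pat, hA, Bool.and_eq_true, Bool.not_eq_true', decide_eq_true_eq,
      decide_eq_false_iff_not] at hp
    obtain ⟨⟨⟨⟨⟨q1, q2⟩, q3⟩, q4⟩, q5⟩, q6⟩ := hp
    exact exists_p4 G q1 q2 q3 q4 q5 q6
  · push_neg at hv
    have hinj : Function.Injective (ext5 (⇑f) v) := ext5_inj f.injective hv
    set A : Fin 5 → Fin 5 → Bool :=
      fun a b => decide (G.Adj (ext5 (⇑f) v a) (ext5 (⇑f) v b)) with hA
    have hs : ∀ i j, A j i = A i j := by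
      intro i j; simp only [hA, decide_eq_decide]; exact G.adj_comm _ _
    have hirr : ∀ i, A i i = false := by intro i; simp [hA]
    have hk : ext5 (⇑f) v 4 = v := rfl
    have hb : ∀ {i j : Fin 5}, i ≠ j →
        (sA A 4 i j = true ↔ (seidelCompl G v).Adj (ext5 (⇑f) v i) (ext5 (⇑f) v j)) :=
      fun hij => sA_bridge (ext5 (⇑f) v) hinj 4 hk hij
    have H1 : sA A 4 0 1 = true := (hb (by decide)).mpr p01
    have H2 : sA A 4 1 2 = true := (hb (by decide)).mpr p12
    have H3 : sA A 4 2 3 = true := (hb (by decide)).mpr p23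
    have H4 : sA A 4 0 2 = false :=
      Bool.eq_false_iff.mpr (fun hx => n02 ((hb (by decide)).mp hx))
    have H5 : sA A 4 0 3 = false :=
      Bool.eq_false_iff.mpr (fun hx => n03 ((hb (by decide)).mp hx))
    have H6 : sA A 4 1 3 = false :=
      Bool.eq_false_iff.mpr (fun hx => n13 ((hb (by decide)).mp hx))
    rw [eqA5 A hs hirr] at H1 H2 H3 H4 H5 H6
    obtain ⟨a, b, c, d, hp⟩ := key5 _ _ _ _ _ _ _ _ _ _ H1 H2 H3 H4 H5 H6
    rw [← eqA5 A hs hirr] at hp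
    simp only [pat, hA, Bool.and_eq_true, Bool.not_eq_true', decide_eq_true_eq,
      decide_eq_false_iff_not] at hp
    obtain ⟨⟨⟨⟨⟨q1, q2⟩, q3⟩, q4⟩, q5⟩, q6⟩ := hp
    exact exists_p4 G q1 q2 q3 q4 q5 q6


/-- `G` is a cograph iff `G*v` is a cograph. -/
theorem isCograph_seidelCompl_iff {V : Type u} [Fintype V] (G : SimpleGraph V) (v : V) :
    IsCograph G ↔ IsCograph (seidelCompl G v) := by
  constructor
  · intro hG
    exact ⟨fun f => hG.false (hasP4_of_seidel G v f).some⟩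
  · intro hG
    refine ⟨fun f => ?_⟩
    have f' : SimpleGraph.pathGraph 4 ↪g seidelCompl (seidelCompl G v) v := by
      rw [seidelCompl_invol]; exact f
    exact hG.false (hasP4_of_seidel (seidelCompl G v) v f').some
end
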